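/- (Theorem 4, estimation of Q̂(β₀).) Let c > 1 and c̄ = (c+1)/(c−1). Suppose λ/n ≥ c‖Γ⁻¹S̃‖_∞, κ̃ > 0, and ρ̄ := λ√s/(nκ̃) < 1. Then any square-root lasso minimizer β̂ satisfies −ϱ_c̄‖β̂ − β₀‖_{2,n} ≤ √Q̂(β̂) − √Q̂(β₀) ≤ ρ̄‖β̂ − β₀‖_{2,n}; and consequently −2ϱ_c̄√Q̂(β₀)·(ϱ_c̄ + ρ̄)/(1 − ρ̄²) ≤ √Q̂(β̂) − √Q̂(β₀) ≤ 2ρ̄√Q̂(β₀)·(ϱ_c̄ + ρ̄)/(1 − ρ̄²). -/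

import Mathlib

open Finset MeasureTheory ProbabilityTheory

namespace SqrtLasso

/-- Empirical average `E_n[h_i] = n⁻¹ ∑ᵢ h i`. -/
noncomputable def En (n : ℕ) (h : Fin n → ℝ) : ℝ := (∑ i, h i) / n

/-- Euclidean inner product `a'b = ∑ⱼ aⱼ bⱼ`. -/
noncomputable def dot {p : ℕ} (a b : Fin p → ℝ) : ℝ := ∑ j, a j * b j

/-- Prediction norm `‖δ‖_{2,n} = (E_n[(x_i'δ)²])^{1/2}`. -/
noncomputable def predNorm (n : ℕ) {p : ℕ} (x : Fin n → Fin p → ℝ) (δ : Fin p → ℝ) : ℝ :=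
  Real.sqrt (En n fun i => (dot (x i) δ) ^ 2)

/-- `ℓ₁` norm of a vector. -/
noncomputable def l1 {p : ℕ} (v : Fin p → ℝ) : ℝ := ∑ j, |v j|

/-- Restriction `v_S`: equal to `v` on `S` and `0` outside. -/
def restr {p : ℕ} (S : Finset (Fin p)) (v : Fin p → ℝ) : Fin p → ℝ :=
  fun j => if j ∈ S then v j else 0

/-- `Γ v`, i.e. componentwise rescaling by loadings `γ`. -/
noncomputable def scl {p : ℕ} (γ v : Fin p → ℝ) : Fin p → ℝ := fun j => γ j * v j

/-- The support of a vector. -/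
noncomputable def supp {p : ℕ} (β : Fin p → ℝ) : Finset (Fin p) := Finset.univ.filter fun j => β j ≠ 0

/-- The least-squares criterion `Q̂(β) = E_n[(y_i - x_i'β)²]`. -/
noncomputable def Qhat (n : ℕ) {p : ℕ} (x : Fin n → Fin p → ℝ) (y : Fin n → ℝ)
    (β : Fin p → ℝ) : ℝ := En n fun i => (y i - dot (x i) β) ^ 2

/-- The restricted set `Δ_c̄`. -/
def Delta {p : ℕ} (γ : Fin p → ℝ) (T : Finset (Fin p)) (cb : ℝ) : Set (Fin p → ℝ) :=
  {δ | δ ≠ 0 ∧ l1 (scl γ (restr Tᶜ δ)) ≤ cb * l1 (scl γ (restr T δ))}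

/-- The restricted eigenvalue `κ_c̄`. -/
noncomputable def kappa (n : ℕ) {p : ℕ} (x : Fin n → Fin p → ℝ) (γ : Fin p → ℝ)
    (T : Finset (Fin p)) (cb : ℝ) : ℝ :=
  sInf {r | ∃ δ ∈ Delta γ T cb,
    r = Real.sqrt T.card * predNorm n x δ / l1 (scl γ (restr T δ))}

/-- The quantity `κ̃`. -/
noncomputable def kappaTilde (n : ℕ) {p : ℕ} (x : Fin n → Fin p → ℝ) (γ : Fin p → ℝ)
    (T : Finset (Fin p)) : ℝ :=
  sInf {r | ∃ δ : Fin p → ℝ, l1 (scl γ (restr Tᶜ δ)) < l1 (scl γ (restr T δ)) ∧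
    r = Real.sqrt T.card * predNorm n x δ /
      (l1 (scl γ (restr T δ)) - l1 (scl γ (restr Tᶜ δ)))}

/-- The score `S̃ = E_n[x_i(σε_i + r_i)] / √(E_n[(σε_i + r_i)²])`. -/
noncomputable def score (n : ℕ) {p : ℕ} (x : Fin n → Fin p → ℝ) (ε rr : Fin n → ℝ)
    (σ : ℝ) : Fin p → ℝ :=
  fun j => En n (fun i => x i j * (σ * ε i + rr i)) /
    Real.sqrt (En n fun i => (σ * ε i + rr i) ^ 2)

/-- `‖Γ⁻¹ S̃‖_∞ = max_j |S̃_j| / γ_j`. -/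
noncomputable def scoreSup (n : ℕ) {p : ℕ} (x : Fin n → Fin p → ℝ) (ε rr : Fin n → ℝ)
    (σ : ℝ) (γ : Fin p → ℝ) : ℝ :=
  ⨆ j, |score n x ε rr σ j| / γ j

/-- The quantity `ϱ_c̄`. -/
noncomputable def varrho (n : ℕ) {p : ℕ} (x : Fin n → Fin p → ℝ) (γ : Fin p → ℝ)
    (T : Finset (Fin p)) (β₀ : Fin p → ℝ) (S : Fin p → ℝ) (cb : ℝ) : ℝ :=
  sSup {r | ∃ δ ∈ Delta γ T cb, 0 < predNorm n x δ ∧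
    l1 (scl γ (δ + β₀)) ≤ cb * l1 (scl γ β₀) ∧ r = |dot S δ| / predNorm n x δ}

/-- Quadratic form `δ'Mδ`. -/
noncomputable def quadForm {p : ℕ} (M : Fin p → Fin p → ℝ) (δ : Fin p → ℝ) : ℝ :=
  ∑ j, ∑ k, δ j * M j k * δ k

/-- Maximal `m`-sparse eigenvalue `φ_max(m, M)`. -/
noncomputable def phiMax {p : ℕ} (M : Fin p → Fin p → ℝ) (T : Finset (Fin p)) (m : ℕ) : ℝ :=
  sSup {r | ∃ δ : Fin p → ℝ, δ ≠ 0 ∧ (supp δ \ T).card ≤ m ∧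
    r = quadForm M δ / ∑ j, (δ j) ^ 2}

/-- Minimal `m`-sparse eigenvalue `φ_min(m, M)`. -/
noncomputable def phiMin {p : ℕ} (M : Fin p → Fin p → ℝ) (T : Finset (Fin p)) (m : ℕ) : ℝ :=
  sInf {r | ∃ δ : Fin p → ℝ, δ ≠ 0 ∧ (supp δ \ T).card ≤ m ∧
    r = quadForm M δ / ∑ j, (δ j) ^ 2}

/-- Gram matrix `E_n[x_i x_i']`. -/
noncomputable def gram (n : ℕ) {p : ℕ} (x : Fin n → Fin p → ℝ) : Fin p → Fin p → ℝ :=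
  fun j k => En n fun i => x i j * x i k

/-- Rescaled Gram matrix `Γ⁻¹ E_n[x_i x_i'] Γ⁻¹`. -/
noncomputable def rgram (n : ℕ) {p : ℕ} (x : Fin n → Fin p → ℝ) (γ : Fin p → ℝ) :
    Fin p → Fin p → ℝ :=
  fun j k => gram n x j k / (γ j * γ k)


/-- Empirical averages of squares are nonnegative. -/
lemma En_sq_nonneg (n : ℕ) (f : Fin n → ℝ) : 0 ≤ En n fun i => f i ^ 2 :=
  div_nonneg (Finset.sum_nonneg fun i _ => sq_nonneg _) (Nat.cast_nonneg n)

/-- Cauchy–Schwarz for empirical averages. -/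
lemma en_CS (n : ℕ) (a b : Fin n → ℝ) :
    |En n (fun i => a i * b i)| ≤
      Real.sqrt (En n fun i => a i ^ 2) * Real.sqrt (En n fun i => b i ^ 2) := by
  rcases Nat.eq_zero_or_pos n with h | h
  · subst h; simp [En]
  have hn : (0:ℝ) < n := by exact_mod_cast h
  have key : |∑ i, a i * b i| ≤ Real.sqrt (∑ i, a i ^ 2) * Real.sqrt (∑ i, b i ^ 2) := by
    have h1 : |∑ i, a i * b i| ≤ ∑ i, |a i| * |b i| := by
      calc |∑ i, a i * b i| ≤ ∑ i, |a i * b i| := Finset.abs_sum_le_sum_abs _ _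
        _ = ∑ i, |a i| * |b i| := by simp [abs_mul]
    refine h1.trans ?_
    have := Real.sum_mul_le_sqrt_mul_sqrt Finset.univ (fun i => |a i|) (fun i => |b i|)
    simpa [sq_abs] using this
  have hs : Real.sqrt (En n fun i => a i ^ 2) * Real.sqrt (En n fun i => b i ^ 2)
      = Real.sqrt (∑ i, a i ^ 2) * Real.sqrt (∑ i, b i ^ 2) / n := by
    rw [En, En, Real.sqrt_div (by positivity), Real.sqrt_div (by positivity)]
    rw [div_mul_div_comm, Real.mul_self_sqrt hn.le]
  rw [hs, En, abs_div, abs_of_pos hn]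
  gcongr

lemma En_expand (n : ℕ) (a b : Fin n → ℝ) :
    En n (fun i => (a i - b i) ^ 2) =
      En n (fun i => a i ^ 2) - 2 * En n (fun i => a i * b i) + En n (fun i => b i ^ 2) := by
  have h : ∑ i, (a i - b i) ^ 2
      = (∑ i, a i ^ 2) - 2 * (∑ i, a i * b i) + ∑ i, b i ^ 2 := by
    rw [Finset.mul_sum, ← Finset.sum_sub_distrib, ← Finset.sum_add_distrib]
    exact Finset.sum_congr rfl fun i _ => by ring
  unfold En; rw [h]; ring

lemma En_sub_mul (n : ℕ) (a b : Fin n → ℝ) :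
    En n (fun i => a i * (a i - b i)) =
      En n (fun i => a i ^ 2) - En n (fun i => a i * b i) := by
  have h : ∑ i, a i * (a i - b i) = (∑ i, a i ^ 2) - ∑ i, a i * b i := by
    rw [← Finset.sum_sub_distrib]
    exact Finset.sum_congr rfl fun i _ => by ring
  unfold En; rw [h]; ring

set_option maxHeartbeats 1600000 in
/-- Theorem 4, estimation of `Q̂(β₀)`. -/
theorem statement_8 (n p : ℕ) (hn : 1 ≤ n) (hp : 1 ≤ p)
    (x : Fin n → Fin p → ℝ) (β₀ γ : Fin p → ℝ) (hγ : ∀ j, 1 ≤ γ j)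
    (hs : 1 ≤ (supp β₀).card)
    (σ : ℝ) (hσ : 0 ≤ σ) (ε rr : Fin n → ℝ) (y : Fin n → ℝ)
    (hy : ∀ i, y i = dot (x i) β₀ + σ * ε i + rr i)
    (hQ : 0 < En n fun i => (σ * ε i + rr i) ^ 2)
    (lam : ℝ) (hlam : 0 < lam)
    (c : ℝ) (hc : 1 < c)
    (hdom : c * scoreSup n x ε rr σ γ ≤ lam / n)
    (βh : Fin p → ℝ)
    (hmin : ∀ β : Fin p → ℝ,
      Real.sqrt (Qhat n x y βh) + lam / n * l1 (scl γ βh) ≤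
        Real.sqrt (Qhat n x y β) + lam / n * l1 (scl γ β))
    (hκ : 0 < kappaTilde n x γ (supp β₀))
    (ρ : ℝ)
    (hρdef : ρ = lam * Real.sqrt (supp β₀).card / (n * kappaTilde n x γ (supp β₀)))
    (hρ : ρ < 1) :
    -(varrho n x γ (supp β₀) β₀ (score n x ε rr σ) ((c + 1) / (c - 1)) *
          predNorm n x (βh - β₀)) ≤
        Real.sqrt (Qhat n x y βh) - Real.sqrt (Qhat n x y β₀) ∧
      Real.sqrt (Qhat n x y βh) - Real.sqrt (Qhat n x y β₀) ≤ ρ * predNorm n x (βh - β₀) ∧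
      -(2 * varrho n x γ (supp β₀) β₀ (score n x ε rr σ) ((c + 1) / (c - 1)) *
            Real.sqrt (Qhat n x y β₀) *
            ((varrho n x γ (supp β₀) β₀ (score n x ε rr σ) ((c + 1) / (c - 1)) + ρ) /
              (1 - ρ ^ 2))) ≤
        Real.sqrt (Qhat n x y βh) - Real.sqrt (Qhat n x y β₀) ∧
      Real.sqrt (Qhat n x y βh) - Real.sqrt (Qhat n x y β₀) ≤
        2 * ρ * Real.sqrt (Qhat n x y β₀) *
          ((varrho n x γ (supp β₀) β₀ (score n x ε rr σ) ((c + 1) / (c - 1)) + ρ) /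
            (1 - ρ ^ 2)) := by
  -- basic positivity facts
  have hc0 : (0:ℝ) < c := lt_trans one_pos hc
  have hc1 : (0:ℝ) < c - 1 := by linarith
  have hn0 : (0:ℝ) < n := by exact_mod_cast hn
  have hn' : (n:ℝ) ≠ 0 := ne_of_gt hn0
  have hL0 : (0:ℝ) < lam / n := div_pos hlam hn0
  have hγpos : ∀ j, (0:ℝ) < γ j := fun j => lt_of_lt_of_le one_pos (hγ j)
  set T := supp β₀ with hT
  set cb := (c + 1) / (c - 1) with hcb
  set δ := βh - β₀ with hδ
  set S := score n x ε rr σ with hS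
  set q0 := Real.sqrt (Qhat n x y β₀) with hq0def
  set qh := Real.sqrt (Qhat n x y βh) with hqhdef
  set t := predNorm n x δ with htdef
  -- Q̂(β₀) in terms of the noise
  have hQ0 : Qhat n x y β₀ = En n fun i => (σ * ε i + rr i) ^ 2 := by
    unfold Qhat; congr 1; funext i; rw [hy i]; ring
  have hQpos : 0 < Qhat n x y β₀ := by rw [hQ0]; exact hQ
  have hq0pos : 0 < q0 := Real.sqrt_pos.mpr hQpos
  have hdotδ : ∀ i, dot (x i) δ = dot (x i) βh - dot (x i) β₀ := by
    intro i
    simp only [dot, hδ, Pi.sub_apply, mul_sub, Finset.sum_sub_distrib]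
  have hQh : Qhat n x y βh = En n fun i => (σ * ε i + rr i - dot (x i) δ) ^ 2 := by
    unfold Qhat; congr 1; funext i; rw [hy i, hdotδ i]; ring
  have hQh0 : 0 ≤ Qhat n x y βh := by rw [hQh]; exact En_sq_nonneg n _
  have hqh0 : 0 ≤ qh := Real.sqrt_nonneg _
  have hq0sq : q0 ^ 2 = Qhat n x y β₀ := Real.sq_sqrt hQpos.le
  have hqhsq : qh ^ 2 = Qhat n x y βh := Real.sq_sqrt hQh0
  have ht2 : t = Real.sqrt (En n fun i => (dot (x i) δ) ^ 2) := by rw [htdef]; rfl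
  have ht0 : 0 ≤ t := by rw [ht2]; exact Real.sqrt_nonneg _
  have htsq' : t ^ 2 = En n fun i => (dot (x i) δ) ^ 2 := by
    rw [ht2]; exact Real.sq_sqrt (En_sq_nonneg n _)
  -- the score in dot products
  have hscore : ∀ j, S j = (En n fun i => x i j * (σ * ε i + rr i)) / q0 := by
    intro j; rw [hS]; unfold score; rw [hq0def, hQ0]
  have hswap : ∀ w : Fin p → ℝ,
      ∑ j, (∑ i, x i j * (σ * ε i + rr i)) * w j
        = ∑ i, (σ * ε i + rr i) * dot (x i) w := by
    intro w
    unfold dot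
    simp only [Finset.sum_mul, Finset.mul_sum]
    rw [Finset.sum_comm]
    exact Finset.sum_congr rfl fun i _ => Finset.sum_congr rfl fun j _ => by ring
  have hSdotg : ∀ w : Fin p → ℝ,
      dot S w = (En n fun i => (σ * ε i + rr i) * dot (x i) w) / q0 := by
    intro w
    have h1 : dot S w = (∑ j, (En n fun i => x i j * (σ * ε i + rr i)) * w j) / q0 := by
      unfold dot; rw [Finset.sum_div]
      exact Finset.sum_congr rfl fun j _ => by rw [hscore j]; ring
    rw [h1]
    congr 1
    unfold En
    calc ∑ j, (∑ i, x i j * (σ * ε i + rr i)) / ↑n * w j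
        = (∑ j, (∑ i, x i j * (σ * ε i + rr i)) * w j) / ↑n := by
          rw [Finset.sum_div]; exact Finset.sum_congr rfl fun j _ => by ring
      _ = (∑ i, (σ * ε i + rr i) * dot (x i) w) / ↑n := by rw [hswap]
  -- |S·w| ≤ ‖w‖_{2,n}
  have hpredg : ∀ w : Fin p → ℝ, |dot S w| ≤ predNorm n x w := by
    intro w
    rw [hSdotg w, abs_div, abs_of_pos hq0pos, div_le_iff₀ hq0pos]
    have hcs := en_CS n (fun i => σ * ε i + rr i) (fun i => dot (x i) w)
    refine hcs.trans (le_of_eq ?_)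
    rw [mul_comm]
    congr 1
    rw [hq0def, hQ0]
  -- convexity-type lower bound
  have hconv : q0 ^ 2 - q0 * qh ≤ En n fun i => (σ * ε i + rr i) * dot (x i) δ := by
    have hcs := en_CS n (fun i => σ * ε i + rr i)
      (fun i => σ * ε i + rr i - dot (x i) δ)
    have h2 : En n (fun i => (σ * ε i + rr i) * (σ * ε i + rr i - dot (x i) δ))
        ≤ q0 * qh := by
      refine le_trans (le_abs_self _) (hcs.trans (le_of_eq ?_))
      congr 1
      · rw [hq0def, hQ0]
      · rw [hqhdef, hQh]
    have h3 : En n (fun i => (σ * ε i + rr i) * (σ * ε i + rr i - dot (x i) δ))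
        = q0 ^ 2 - En n (fun i => (σ * ε i + rr i) * dot (x i) δ) := by
      rw [En_sub_mul, hq0sq, hQ0]
    linarith [h2, h3.le, h3.ge]
  have hlowA : q0 - qh ≤ dot S δ := by
    rw [hSdotg δ, le_div_iff₀ hq0pos]
    have e : (q0 - qh) * q0 = q0 ^ 2 - q0 * qh := by ring
    linarith [hconv]
  -- ℓ1 facts
  have hl1nonneg : ∀ w : Fin p → ℝ, 0 ≤ l1 w :=
    fun w => Finset.sum_nonneg fun j _ => abs_nonneg _
  have hl1γ : ∀ w : Fin p → ℝ, l1 (scl γ w) = ∑ j, γ j * |w j| := by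
    intro w; unfold l1 scl
    exact Finset.sum_congr rfl fun j _ => by rw [abs_mul, abs_of_pos (hγpos j)]
  have hsupp0 : ∀ j, j ∉ T → β₀ j = 0 := by
    intro j hj; by_contra h; exact hj (by simp [hT, supp, h])
  have hsplitδ : l1 (scl γ δ) = l1 (scl γ (restr T δ)) + l1 (scl γ (restr Tᶜ δ)) := by
    unfold l1 scl restr
    rw [← Finset.sum_add_distrib]
    apply Finset.sum_congr rfl
    intro j _
    by_cases h : j ∈ T <;> simp [h, Finset.mem_compl]
  have hkey1 : l1 (scl γ β₀) - l1 (scl γ βh)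
      ≤ l1 (scl γ (restr T δ)) - l1 (scl γ (restr Tᶜ δ)) := by
    unfold l1 scl restr
    rw [← Finset.sum_sub_distrib, ← Finset.sum_sub_distrib]
    apply Finset.sum_le_sum
    intro j _
    by_cases h : j ∈ T
    · have h2 : j ∉ Tᶜ := by simp [h]
      simp only [if_pos h, if_neg h2, mul_zero, abs_zero, sub_zero]
      have h3 := abs_sub_abs_le_abs_sub (γ j * β₀ j) (γ j * βh j)
      have h4 : γ j * β₀ j - γ j * βh j = -(γ j * δ j) := by
        simp only [hδ, Pi.sub_apply]; ring
      rw [h4, abs_neg] at h3; exact h3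
    · have h2 : j ∈ Tᶜ := Finset.mem_compl.mpr h
      have hb := hsupp0 j h
      have h5 : δ j = βh j := by simp only [hδ, Pi.sub_apply, hb, sub_zero]
      simp only [if_neg h, if_pos h2, hb, mul_zero, abs_zero, zero_sub, h5]
      exact le_refl _
  have hkey2 : l1 (scl γ δ) ≤ l1 (scl γ βh) + l1 (scl γ β₀) := by
    unfold l1 scl
    rw [← Finset.sum_add_distrib]
    apply Finset.sum_le_sum
    intro j _
    have h1 : γ j * δ j = γ j * βh j - γ j * β₀ j := by
      simp only [hδ, Pi.sub_apply]; ring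
    rw [h1]; exact abs_sub _ _
  -- optimality
  have hminβ := hmin β₀
  rw [← hq0def] at hminβ
  have hopt : qh - q0 ≤ lam / n * (l1 (scl γ β₀) - l1 (scl γ βh)) := by
    have e : lam / n * (l1 (scl γ β₀) - l1 (scl γ βh))
        = lam / n * l1 (scl γ β₀) - lam / n * l1 (scl γ βh) := by ring
    rw [e]; linarith [hminβ]
  -- score sup bounds
  have hss : ∀ j, |S j| / γ j ≤ scoreSup n x ε rr σ γ := by
    intro j
    unfold scoreSup
    rw [← hS]
    exact le_ciSup (f := fun j => |S j| / γ j) ((Set.finite_range _).bddAbove) j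
  have hssle : ∀ j, |S j| ≤ scoreSup n x ε rr σ γ * γ j := by
    intro j
    have h1 := hss j
    calc |S j| = |S j| / γ j * γ j := (div_mul_cancel₀ _ (ne_of_gt (hγpos j))).symm
      _ ≤ scoreSup n x ε rr σ γ * γ j :=
        mul_le_mul_of_nonneg_right h1 (hγpos j).le
  have hssmax : scoreSup n x ε rr σ γ ≤ lam / n / c := by
    rw [le_div_iff₀ hc0, mul_comm]; exact hdom
  have hSl1 : ∀ w : Fin p → ℝ, |dot S w| ≤ lam / n / c * l1 (scl γ w) := by
    intro w
    have habs1 : |dot S w| ≤ ∑ j, |S j| * |w j| := by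
      refine (Finset.abs_sum_le_sum_abs _ _).trans (le_of_eq ?_)
      exact Finset.sum_congr rfl fun j _ => abs_mul _ _
    have h2 : ∑ j, |S j| * |w j| ≤ scoreSup n x ε rr σ γ * l1 (scl γ w) := by
      rw [hl1γ, Finset.mul_sum]
      apply Finset.sum_le_sum; intro j _
      calc |S j| * |w j| ≤ scoreSup n x ε rr σ γ * γ j * |w j| :=
            mul_le_mul_of_nonneg_right (hssle j) (abs_nonneg _)
        _ = scoreSup n x ε rr σ γ * (γ j * |w j|) := by ring
    refine habs1.trans (h2.trans ?_)
    exact mul_le_mul_of_nonneg_right hssmax (hl1nonneg _)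
  -- the cone property
  have hDlow : -(lam / n / c) * (l1 (scl γ (restr T δ)) + l1 (scl γ (restr Tᶜ δ)))
      ≤ qh - q0 := by
    have h1 : -|dot S δ| ≤ qh - q0 := by
      have := le_abs_self (dot S δ); linarith [hlowA]
    have h2 : |dot S δ| ≤ lam / n / c * (l1 (scl γ (restr T δ)) + l1 (scl γ (restr Tᶜ δ))) := by
      rw [← hsplitδ]; exact hSl1 δ
    linarith
  have hDup : qh - q0 ≤ lam / n * (l1 (scl γ (restr T δ)) - l1 (scl γ (restr Tᶜ δ))) :=
    hopt.trans (mul_le_mul_of_nonneg_left hkey1 hL0.le)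
  have hcone : l1 (scl γ (restr Tᶜ δ)) ≤ cb * l1 (scl γ (restr T δ)) := by
    set aT := l1 (scl γ (restr T δ))
    set aTc := l1 (scl γ (restr Tᶜ δ))
    have h3 : -(lam / n / c) * (aT + aTc) ≤ lam / n * (aT - aTc) := le_trans hDlow hDup
    have h3' : lam / n * (-((aT + aTc) / c)) ≤ lam / n * (aT - aTc) := by
      have e : lam / n * (-((aT + aTc) / c)) = -(lam / n / c) * (aT + aTc) := by
        ring
      rw [e]; exact h3
    have h3'' : -((aT + aTc) / c) ≤ aT - aTc := (mul_le_mul_iff_right₀ hL0).mp h3'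
    have h4 : -(aT + aTc) ≤ c * (aT - aTc) := by
      have h5 := mul_le_mul_of_nonneg_left h3'' hc0.le
      have e : c * -((aT + aTc) / c) = -(aT + aTc) := by field_simp
      rw [e] at h5; exact h5
    rw [hcb, div_mul_eq_mul_div, le_div_iff₀ hc1]
    linarith [h4]
  -- ℓ1 bound for β̂
  have hβhl1 : l1 (scl γ βh) ≤ cb * l1 (scl γ β₀) := by
    set b1 := l1 (scl γ βh)
    set b0 := l1 (scl γ β₀)
    have h1 : lam / n * (b1 - b0) ≤ |dot S δ| := by
      have e : lam / n * (b1 - b0) = lam / n * b1 - lam / n * b0 := by ring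
      rw [e]
      have := le_abs_self (dot S δ)
      linarith [hminβ, hlowA]
    have h2 : |dot S δ| ≤ lam / n / c * (b1 + b0) :=
      (hSl1 δ).trans (mul_le_mul_of_nonneg_left hkey2 (by positivity))
    have h3 : lam / n * (b1 - b0) ≤ lam / n * ((b1 + b0) / c) := by
      have e : lam / n * ((b1 + b0) / c) = lam / n / c * (b1 + b0) := by
        ring
      rw [e]; exact h1.trans h2
    have h4 : b1 - b0 ≤ (b1 + b0) / c := (mul_le_mul_iff_right₀ hL0).mp h3
    have h5 : c * (b1 - b0) ≤ b1 + b0 := by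
      have h6 := mul_le_mul_of_nonneg_left h4 hc0.le
      have e : c * ((b1 + b0) / c) = b1 + b0 := by field_simp
      rw [e] at h6; exact h6
    rw [hcb, div_mul_eq_mul_div, le_div_iff₀ hc1]
    linarith [h5]
  -- ρ > 0
  have hcard : (0:ℝ) < (T.card : ℝ) := by
    have h : (1:ℝ) ≤ (T.card : ℝ) := by exact_mod_cast hs
    linarith
  have hρ0 : 0 < ρ := by
    rw [hρdef]
    exact div_pos (mul_pos hlam (Real.sqrt_pos.mpr hcard)) (mul_pos hn0 hκ)
  -- part 2 : qh - q0 ≤ ρ t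
  have hD2 : qh - q0 ≤ ρ * t := by
    by_cases hd : l1 (scl γ (restr T δ)) - l1 (scl γ (restr Tᶜ δ)) ≤ 0
    · have h1 : lam / n * (l1 (scl γ (restr T δ)) - l1 (scl γ (restr Tᶜ δ))) ≤ 0 :=
        mul_nonpos_of_nonneg_of_nonpos hL0.le hd
      have h2 : 0 ≤ ρ * t := mul_nonneg hρ0.le ht0
      linarith [hDup]
    · push_neg at hd
      have hlt : l1 (scl γ (restr Tᶜ δ)) < l1 (scl γ (restr T δ)) := by linarith
      have hinf : kappaTilde n x γ T ≤ Real.sqrt T.card * predNorm n x δ /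
          (l1 (scl γ (restr T δ)) - l1 (scl γ (restr Tᶜ δ))) := by
        unfold kappaTilde
        refine csInf_le ⟨0, ?_⟩ ⟨δ, hlt, rfl⟩
        rintro r ⟨δ', h1, rfl⟩
        have hpos : 0 < l1 (scl γ (restr T δ')) - l1 (scl γ (restr Tᶜ δ')) := by linarith
        apply div_nonneg _ hpos.le
        exact mul_nonneg (Real.sqrt_nonneg _) (Real.sqrt_nonneg _)
      have hdiff : (0:ℝ) < l1 (scl γ (restr T δ)) - l1 (scl γ (restr Tᶜ δ)) := by linarith
      have h5 : kappaTilde n x γ T * (l1 (scl γ (restr T δ)) - l1 (scl γ (restr Tᶜ δ)))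
          ≤ Real.sqrt T.card * t := by
        have h6 := (le_div_iff₀ hdiff).mp hinf
        rw [← htdef] at h6
        exact h6
      have h6 : l1 (scl γ (restr T δ)) - l1 (scl γ (restr Tᶜ δ))
          ≤ Real.sqrt T.card * t / kappaTilde n x γ T := by
        rw [le_div_iff₀ hκ]
        linarith [h5]
      calc qh - q0 ≤ lam / n * (l1 (scl γ (restr T δ)) - l1 (scl γ (restr Tᶜ δ))) := hDup
        _ ≤ lam / n * (Real.sqrt T.card * t / kappaTilde n x γ T) :=
            mul_le_mul_of_nonneg_left h6 hL0.le
        _ = ρ * t := by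
            rw [hρdef]
            field_simp
  -- varrho facts
  set vr := varrho n x γ T β₀ S cb with hvrdef
  have hSetBdd : BddAbove {r | ∃ δ' ∈ Delta γ T cb, 0 < predNorm n x δ' ∧
      l1 (scl γ (δ' + β₀)) ≤ cb * l1 (scl γ β₀) ∧ r = |dot S δ'| / predNorm n x δ'} := by
    refine ⟨1, ?_⟩
    rintro r ⟨δ', _, hpos, _, rfl⟩
    rw [div_le_one hpos]
    exact hpredg δ'
  have hvr0 : 0 ≤ vr := by
    rw [hvrdef]
    unfold varrho
    apply Real.sSup_nonneg
    rintro r ⟨δ', _, hpos, _, rfl⟩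
    positivity
  have hδβ : δ + β₀ = βh := by
    funext j; simp [hδ]
  have hvarb : |dot S δ| ≤ vr * t := by
    by_cases hl : 0 < t
    · have hδne : δ ≠ 0 := by
        intro h0
        rw [ht2, h0] at hl
        simp [dot, En] at hl
      have hmem : |dot S δ| / t ∈ {r | ∃ δ' ∈ Delta γ T cb, 0 < predNorm n x δ' ∧
          l1 (scl γ (δ' + β₀)) ≤ cb * l1 (scl γ β₀) ∧ r = |dot S δ'| / predNorm n x δ'} := by
        refine ⟨δ, ⟨hδne, hcone⟩, ?_, ?_, ?_⟩
        · rw [← htdef]; exact hl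
        · rw [hδβ]; exact hβhl1
        · rw [← htdef]
      have hle : |dot S δ| / t ≤ vr := by
        rw [hvrdef]
        unfold varrho
        exact le_csSup hSetBdd hmem
      exact (div_le_iff₀ hl).mp hle
    · have hteq : t = 0 := le_antisymm (not_lt.mp hl) ht0
      have h1 : |dot S δ| ≤ t := by
        rw [htdef]; exact hpredg δ
      rw [hteq] at h1 ⊢
      rw [mul_zero]
      exact h1
  -- part 1
  have hD1 : -(vr * t) ≤ qh - q0 := by
    have := le_abs_self (dot S δ)
    linarith [hlowA, hvarb]
  -- the bound on t
  have hEuv : En n (fun i => (σ * ε i + rr i) * dot (x i) δ) = q0 * dot S δ := by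
    rw [hSdotg δ]
    field_simp
  have hEuvle : En n (fun i => (σ * ε i + rr i) * dot (x i) δ) ≤ q0 * (vr * t) := by
    rw [hEuv]
    have h1 : dot S δ ≤ vr * t := le_trans (le_abs_self _) hvarb
    exact mul_le_mul_of_nonneg_left h1 hq0pos.le
  have htsq : t ^ 2 = (qh - q0) ^ 2 + 2 * q0 * (qh - q0)
      + 2 * En n (fun i => (σ * ε i + rr i) * dot (x i) δ) := by
    have h1 : Qhat n x y βh = Qhat n x y β₀
        - 2 * En n (fun i => (σ * ε i + rr i) * dot (x i) δ)
        + En n (fun i => (dot (x i) δ) ^ 2) := by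
      rw [hQh, hQ0, En_expand]
    rw [htsq']
    linear_combination -h1 - hqhsq + hq0sq
  have hρ2 : 0 < 1 - ρ ^ 2 := by
    have h1 : ρ ^ 2 < 1 := pow_lt_one₀ hρ0.le hρ (by norm_num)
    linarith
  have hstep : (qh - q0) ^ 2 + 2 * q0 * (qh - q0) ≤ ρ ^ 2 * t ^ 2 + 2 * q0 * (ρ * t) := by
    rcases le_or_gt 0 (qh - q0) with h | h
    · have h8 : (qh - q0) ^ 2 ≤ (ρ * t) ^ 2 := by
        rw [sq, sq]; exact mul_self_le_mul_self h hD2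
      have h9 : 2 * q0 * (qh - q0) ≤ 2 * q0 * (ρ * t) :=
        mul_le_mul_of_nonneg_left hD2 (by linarith)
      have h10 : (ρ * t) ^ 2 = ρ ^ 2 * t ^ 2 := by ring
      linarith
    · have hLeq : (qh - q0) ^ 2 + 2 * q0 * (qh - q0) = (qh - q0) * (qh + q0) := by ring
      have h8 : (qh - q0) * (qh + q0) ≤ 0 :=
        mul_nonpos_of_nonpos_of_nonneg h.le (by linarith)
      have h9 : (0:ℝ) ≤ ρ ^ 2 * t ^ 2 := by positivity
      have h10 : (0:ℝ) ≤ 2 * q0 * (ρ * t) :=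
        mul_nonneg (by linarith) (mul_nonneg hρ0.le ht0)
      linarith
  have hmain : (1 - ρ ^ 2) * t ^ 2 ≤ 2 * q0 * (vr + ρ) * t := by
    have e1 : (1 - ρ ^ 2) * t ^ 2 = t ^ 2 - ρ ^ 2 * t ^ 2 := by ring
    have e2 : 2 * q0 * (vr + ρ) * t = 2 * q0 * (vr * t) + 2 * q0 * (ρ * t) := by ring
    linarith [hstep, hEuvle, htsq]
  have htB : t ≤ 2 * q0 * (vr + ρ) / (1 - ρ ^ 2) := by
    rcases eq_or_lt_of_le ht0 with h | h
    · rw [← h]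
      apply div_nonneg _ hρ2.le
      have h2 : (0:ℝ) ≤ vr + ρ := by linarith [hvr0, hρ0]
      positivity
    · rw [le_div_iff₀ hρ2]
      have h7 : t * (1 - ρ ^ 2) * t ≤ 2 * q0 * (vr + ρ) * t := by
        calc t * (1 - ρ ^ 2) * t = (1 - ρ ^ 2) * t ^ 2 := by ring
          _ ≤ 2 * q0 * (vr + ρ) * t := hmain
      exact le_of_mul_le_mul_right h7 h
  refine ⟨hD1, hD2, ?_, ?_⟩
  · have h1 : vr * t ≤ vr * (2 * q0 * (vr + ρ) / (1 - ρ ^ 2)) :=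
      mul_le_mul_of_nonneg_left htB hvr0
    have h2 : vr * (2 * q0 * (vr + ρ) / (1 - ρ ^ 2))
        = 2 * vr * q0 * ((vr + ρ) / (1 - ρ ^ 2)) := by ring
    linarith [hD1, h1]
  · have h1 : ρ * t ≤ ρ * (2 * q0 * (vr + ρ) / (1 - ρ ^ 2)) :=
      mul_le_mul_of_nonneg_left htB hρ0.le
    have h2 : ρ * (2 * q0 * (vr + ρ) / (1 - ρ ^ 2))
        = 2 * ρ * q0 * ((vr + ρ) / (1 - ρ ^ 2)) := by ring
    linarith [hD2, h1]
end SqrtLasso
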